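/- For every level datum L there exists an integer N ≥ 0 such that the N-th iterate M := S_∞^{[N]}(L) satisfies S_∞(M) = M; that is, the local simplification algorithm at infinity always terminates, reaching a level datum that is either empty, or has largest level < 1, or has largest level > 2. -/

import Mathlib

open Finset

/-- The ramification order of a level datum: the least common denominator of its
elements, i.e. the lcm of the denominators (`ram ∅ = 1`). -/
def ram (L : Finset ℚ) : ℕ := L.lcm Rat.den

/-- The least common denominator `d` of the "initial segment" of `L` consisting of the
elements `≥ k` (the elements come in decreasing order `k₀ > k₁ > ⋯`). -/
def segLcm (L : Finset ℚ) (k : ℚ) : ℕ := (L.filter (fun x => k ≤ x)).lcm Rat.den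

/-- A level datum: a finite set of positive rationals such that the least common
denominators `d₀, d₁, …` of the initial segments (for the decreasing order) are all `≥ 2`
and form a strictly increasing sequence.  (Since the `d_j` are increasing, requiring
`d_j ≥ 2` for all `j` is equivalent to `d₀ ≥ 2`, i.e. to the largest element not being
an integer.) -/
def IsLevelDatum (L : Finset ℚ) : Prop :=
  (∀ k ∈ L, 0 < k) ∧
  (∀ k ∈ L, 2 ≤ segLcm L k) ∧
  (∀ k ∈ L, ∀ k' ∈ L, k' < k → segLcm L k < segLcm L k')

/-- The largest level of `L` (junk value `0` for `L = ∅`). -/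
def maxLevel (L : Finset ℚ) : ℚ := WithBot.unbotD 0 L.max

/-- The numerator `s(k) := k · Ram(L) ∈ ℤ` of a level `k` of `L`. -/
def numer (L : Finset ℚ) (k : ℚ) : ℤ := (k * (ram L : ℚ)).num

/-- `σ := k₀ · Ram(L) ∈ ℤ`, the numerator of the largest level. -/
def sigma0 (L : Finset ℚ) : ℤ := numer L (maxLevel L)

/-- `gcd(s(x) for x ∈ s, Ram L)` : the gcd of `Ram L` together with the numerators of the
elements of a subset `s ⊆ L`. -/
def gSeg (L : Finset ℚ) (s : Finset ℚ) : ℕ :=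
  Nat.gcd (ram L) (s.gcd (fun x => (numer L x).natAbs))

/-- The quantity
`B_L = (r − (s₀,r))·s₀ + Σᵢ ((s₀,…,s_{i−1},r) − (s₀,…,s_i,r))·s_i − r² + 1`
(`B_∅ = 0`), equal to the dimension of the elementary wild character variety. -/
def B (L : Finset ℚ) : ℤ :=
  (∑ k ∈ L, ((gSeg L (L.filter (fun x => k < x)) : ℤ)
      - (gSeg L (L.filter (fun x => k ≤ x)) : ℤ)) * numer L k)
    - (ram L : ℤ) ^ 2 + 1

/-- A level datum is locally minimal at infinity if it is empty, or its largest level is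
`< 1` or `> 2`. -/
def LocallyMinimal (L : Finset ℚ) : Prop :=
  L = ∅ ∨ maxLevel L < 1 ∨ 2 < maxLevel L

/-- Rescaling of a level datum by a factor `c`, removing the integer elements. -/
def rescale (L : Finset ℚ) (c : ℚ) : Finset ℚ :=
  (L.image (fun k => c * k)).filter (fun x => x.den ≠ 1)

/-- The local simplification map `S_∞` on level data: if the largest level `k₀` satisfies
`1 < k₀ < 2`, rescale all the levels by `ρ/(σ−ρ)` (where `ρ = Ram L`, `σ = k₀·ρ`) and
remove the integer levels; otherwise do nothing. -/
def Sinf (L : Finset ℚ) : Finset ℚ :=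
  if 1 < maxLevel L ∧ maxLevel L < 2 then
    rescale L ((ram L : ℚ) / ((sigma0 L : ℚ) - (ram L : ℚ)))
  else L

lemma ram_pos (L : Finset ℚ) : 0 < ram L := by
  rw [Nat.pos_iff_ne_zero]
  intro h
  rw [ram, Finset.lcm_eq_zero_iff] at h
  obtain ⟨x, _, hx0⟩ := h
  exact Rat.den_ne_zero x hx0

lemma maxLevel_mem {L : Finset ℚ} (h : L.Nonempty) : maxLevel L ∈ L := by
  obtain ⟨a, ha⟩ := Finset.max_of_nonempty h
  simpa [maxLevel, ha] using Finset.mem_of_max ha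

lemma le_maxLevel {L : Finset ℚ} {x : ℚ} (hx : x ∈ L) : x ≤ maxLevel L := by
  obtain ⟨a, ha⟩ := Finset.max_of_nonempty ⟨x, hx⟩
  have := Finset.le_max hx
  rw [ha] at this
  simpa [maxLevel, ha] using this

lemma den_dvd_div (a b : ℤ) : ((a : ℚ) / b).den ∣ b.natAbs := by
  have h := Rat.den_dvd a b
  rw [Rat.divInt_eq_div] at h
  simpa using Int.natAbs_dvd_natAbs.mpr h

lemma numer_cast {L : Finset ℚ} {x : ℚ} (hx : x ∈ L) :
    ((numer L x : ℤ) : ℚ) = x * (ram L : ℚ) := by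
  obtain ⟨c, hc⟩ : x.den ∣ ram L := Finset.dvd_lcm hx
  have hd : (x.den : ℚ) ≠ 0 := by exact_mod_cast x.den_nz
  have hx1 : x * (x.den : ℚ) = (x.num : ℚ) := Rat.mul_den_eq_num x
  have hval : x * (ram L : ℚ) = ((x.num * c : ℤ) : ℚ) := by
    rw [hc]
    push_cast
    rw [← mul_assoc, hx1]
  rw [numer, hval, Rat.num_intCast]

lemma sigma0_bounds {L : Finset ℚ} (hC : 1 < maxLevel L ∧ maxLevel L < 2) :
    (ram L : ℤ) < sigma0 L ∧ sigma0 L < 2 * ram L := by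
  have hne : L.Nonempty := by
    rcases Finset.eq_empty_or_nonempty L with h | h
    · subst h
      have h0 : maxLevel (∅ : Finset ℚ) = 0 := by
        simp [maxLevel, Finset.max_empty]
      rw [h0] at hC
      exact absurd hC.1 (by norm_num)
    · exact h
  have hρ : (0:ℚ) < (ram L : ℚ) := by exact_mod_cast ram_pos L
  have hσ : ((sigma0 L : ℤ) : ℚ) = maxLevel L * (ram L : ℚ) :=
    numer_cast (maxLevel_mem hne)
  constructor
  · have : (ram L : ℚ) < ((sigma0 L : ℤ) : ℚ) := by rw [hσ]; nlinarith [hC.1]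
    exact_mod_cast this
  · have : ((sigma0 L : ℤ) : ℚ) < 2 * (ram L : ℚ) := by rw [hσ]; nlinarith [hC.2]
    exact_mod_cast this

lemma ram_Sinf_lt {L : Finset ℚ} (hC : 1 < maxLevel L ∧ maxLevel L < 2) :
    ram (Sinf L) < ram L := by
  obtain ⟨h1, h2⟩ := sigma0_bounds hC
  have hne : L.Nonempty := by
    rcases Finset.eq_empty_or_nonempty L with h | h
    · subst h
      have h0 : maxLevel (∅ : Finset ℚ) = 0 := by
        simp [maxLevel, Finset.max_empty]
      rw [h0] at hC
      exact absurd hC.1 (by norm_num)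
    · exact h
  rw [Sinf, if_pos hC]
  have hdvd : ram (rescale L ((ram L : ℚ) / ((sigma0 L : ℚ) - (ram L : ℚ))))
      ∣ (sigma0 L - (ram L : ℤ)).natAbs := by
    apply Finset.lcm_dvd
    intro y hy
    rw [rescale, Finset.mem_filter, Finset.mem_image] at hy
    obtain ⟨⟨k, hk, rfl⟩, _⟩ := hy
    have hnk : ((numer L k : ℤ) : ℚ) = k * (ram L : ℚ) := numer_cast hk
    have hden : ((sigma0 L : ℚ) - (ram L : ℚ)) ≠ 0 := by
      have : (ram L : ℚ) < (sigma0 L : ℚ) := by exact_mod_cast h1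
      linarith
    have heq : (ram L : ℚ) / ((sigma0 L : ℚ) - (ram L : ℚ)) * k
        = ((numer L k : ℤ) : ℚ) / (((sigma0 L - (ram L : ℤ)) : ℤ) : ℚ) := by
      rw [hnk]
      push_cast
      field_simp
    rw [heq]
    exact den_dvd_div _ _
  have hpos : (sigma0 L - (ram L : ℤ)).natAbs ≠ 0 := by omega
  have hle := Nat.le_of_dvd (Nat.pos_of_ne_zero hpos) hdvd
  omega

lemma Sinf_inv {L : Finset ℚ} (h : L = ∅ ∨ (maxLevel L).den ≠ 1) :
    Sinf L = ∅ ∨ (maxLevel (Sinf L)).den ≠ 1 := by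
  by_cases hC : 1 < maxLevel L ∧ maxLevel L < 2
  · rcases Finset.eq_empty_or_nonempty (Sinf L) with he | hne
    · left; exact he
    · right
      have hm := maxLevel_mem hne
      rw [Sinf, if_pos hC, rescale] at hm ⊢
      rw [Finset.mem_filter] at hm
      exact hm.2
  · rwa [Sinf, if_neg hC]

lemma locmin_of {L : Finset ℚ} (hinv : L = ∅ ∨ (maxLevel L).den ≠ 1)
    (hC : ¬(1 < maxLevel L ∧ maxLevel L < 2)) : LocallyMinimal L := by
  rcases hinv with rfl | hd
  · left; rfl
  · right
    have h1 : maxLevel L ≠ 1 := by intro h; rw [h] at hd; simp at hd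
    have h2 : maxLevel L ≠ 2 := by
      intro h; rw [h] at hd; exact hd rfl
    rcases le_or_gt (maxLevel L) 1 with h | h
    · left; exact lt_of_le_of_ne h h1
    · right
      rcases le_or_gt 2 (maxLevel L) with h' | h'
      · exact lt_of_le_of_ne h' (Ne.symm h2)
      · exact absurd ⟨h, h'⟩ hC

lemma stmt11_aux : ∀ n : ℕ, ∀ L : Finset ℚ, ram L ≤ n →
    (L = ∅ ∨ (maxLevel L).den ≠ 1) →
    ∃ N : ℕ, Sinf (Sinf^[N] L) = Sinf^[N] L ∧ LocallyMinimal (Sinf^[N] L) := by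
  intro n
  induction n with
  | zero => intro L h _; exact absurd h (by have := ram_pos L; omega)
  | succ n ih =>
    intro L hn hinv
    by_cases hC : 1 < maxLevel L ∧ maxLevel L < 2
    · obtain ⟨N, hfix, hmin⟩ := ih (Sinf L) (by have := ram_Sinf_lt hC; omega)
        (Sinf_inv hinv)
      refine ⟨N + 1, ?_, ?_⟩
      · rw [Function.iterate_succ_apply]; exact hfix
      · rw [Function.iterate_succ_apply]; exact hmin
    · exact ⟨0, by rw [Function.iterate_zero_apply, Sinf, if_neg hC],
        by rw [Function.iterate_zero_apply]; exact locmin_of hinv hC⟩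

/-- for every level datum `L`, the iteration of the local simplification
map `S_∞` stabilizes after finitely many steps, reaching a locally minimal level datum
(empty, or with largest level `< 1` or `> 2`). -/
theorem stmt_11 (L : Finset ℚ) (hL : IsLevelDatum L) :
    ∃ N : ℕ, Sinf (Sinf^[N] L) = Sinf^[N] L ∧ LocallyMinimal (Sinf^[N] L) := by
  refine stmt11_aux (ram L) L le_rfl ?_
  rcases Finset.eq_empty_or_nonempty L with h | h
  · left; exact h
  · right
    have hmem := maxLevel_mem h
    have h2 := hL.2.1 _ hmem
    have hfilter : L.filter (fun x => maxLevel L ≤ x) = {maxLevel L} := by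
      ext x
      simp only [Finset.mem_filter, Finset.mem_singleton]
      constructor
      · rintro ⟨hx, hle⟩
        exact le_antisymm (le_maxLevel hx) hle
      · rintro rfl; exact ⟨hmem, le_refl _⟩
    rw [segLcm, hfilter, Finset.lcm_singleton] at h2
    simp only [normalize_eq] at h2
    omega
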